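/- For every real t ≠ 0, the longitude matrix W_t = N_t·M_t⁻¹·N_t⁻¹·M_t²·N_t⁻¹·M_t⁻¹·N_t, where M_t is the 4×4 matrix with rows (1,0,1,t−1), (0,1,1,t), (0,0,1,t+1/2), (0,0,0,1) and N_t has rows (1,0,0,0), (2+1/t,1,0,0), (2,1,1,0), (1,1,0,1), has characteristic polynomial (X − 2t)³·(X − 1/(8t³)). In particular, for t > 0 the matrix W_t is unipotent if and only if t = 1/2. -/

import Mathlib

set_option maxHeartbeats 1000000

open Polynomial

/-- The meridian matrix `M_t = ρ_t(m)`. -/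
noncomputable def Mmat (t : ℝ) : Matrix (Fin 4) (Fin 4) ℝ :=
  !![1, 0, 1, t - 1;
     0, 1, 1, t;
     0, 0, 1, t + 1 / 2;
     0, 0, 0, 1]

/-- The meridian matrix `N_t = ρ_t(n)`. -/
noncomputable def Nmat (t : ℝ) : Matrix (Fin 4) (Fin 4) ℝ :=
  !![1, 0, 0, 0;
     2 + 1 / t, 1, 0, 0;
     2, 1, 1, 0;
     1, 1, 0, 1]

/-- The longitude matrix `W_t = ρ_t(l)`, `l = n m⁻¹ n⁻¹ m² n⁻¹ m⁻¹ n`. -/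
noncomputable def Wmat (t : ℝ) : Matrix (Fin 4) (Fin 4) ℝ :=
  Nmat t * (Mmat t)⁻¹ * (Nmat t)⁻¹ * (Mmat t) ^ 2 * (Nmat t)⁻¹ * (Mmat t)⁻¹ * Nmat t

noncomputable def Minv (t : ℝ) : Matrix (Fin 4) (Fin 4) ℝ :=
  !![1, 0, -1, 3/2;
     0, 1, -1, 1/2;
     0, 0, 1, -t - 1/2;
     0, 0, 0, 1]

noncomputable def Ninv (t : ℝ) : Matrix (Fin 4) (Fin 4) ℝ :=
  !![1, 0, 0, 0;
     -2 - 1 / t, 1, 0, 0;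
     1 / t, -1, 1, 0;
     1 + 1 / t, -1, 0, 1]

noncomputable def P1 (t : ℝ) : Matrix (Fin 4) (Fin 4) ℝ :=
  !![1, 0, -1, 3/2;
     2 + 1 / t, 1, -3 - 1 / t, 7/2 + 3/2 / t;
     2, 1, -2, -t + 3;
     1, 1, -2, 3]

noncomputable def P2 (t : ℝ) : Matrix (Fin 4) (Fin 4) ℝ :=
  !![5/2 + 1/2 / t, -1/2, -1, 3/2;
     7/2 + 2 / t + 1/2 / t^2, 1/2 - 1/2 / t, -3 - 1 / t, 7/2 + 3/2 / t;
     -t + 2, t, -2, -t + 3;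
     2, 0, -2, 3]

noncomputable def P3 (t : ℝ) : Matrix (Fin 4) (Fin 4) ℝ :=
  !![5/2 + 1/2 / t, -1/2, 1 + 1/2 / t, t - 1 - 1/2 / t;
     7/2 + 2 / t + 1/2 / t^2, 1/2 - 1/2 / t, 1 + 1/2 / t + 1/2 / t^2, t - 1 - 1/2 / t - 1/2 / t^2;
     -t + 2, t, 0, 0;
     2, 0, 0, 0]

noncomputable def P4 (t : ℝ) : Matrix (Fin 4) (Fin 4) ℝ :=
  !![5/2 + 1/2 / t, -1/2, 3 + 1 / t, 4 * t - 2 - 3/4 / t;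
     7/2 + 2 / t + 1/2 / t^2, 1/2 - 1/2 / t, 5 + 2 / t + 1 / t^2, 6 * t - 2 - 5/4 / t - 3/4 / t^2;
     -t + 2, t, 2, 3 * t - 2;
     2, 0, 2, 2 * t - 2]

noncomputable def P5 (t : ℝ) : Matrix (Fin 4) (Fin 4) ℝ :=
  !![4 * t + 11/2 + 5/4 / t + 1/4 / t^2, -4 * t - 3/2 - 1/4 / t, 3 + 1 / t, 4 * t - 2 - 3/4 / t;
     6 * t + 13/2 + 17/4 / t + 1 / t^2 + 1/4 / t^3, -6 * t - 5/2 - 5/4 / t - 1/4 / t^2, 5 + 2 / t + 1 / t^2, 6 * t - 2 - 5/4 / t - 3/4 / t^2;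
     2, -2 * t, 2, 3 * t - 2;
     2 * t + 2, -2 * t, 2, 2 * t - 2]

noncomputable def P6 (t : ℝ) : Matrix (Fin 4) (Fin 4) ℝ :=
  !![4 * t + 11/2 + 5/4 / t + 1/4 / t^2, -4 * t - 3/2 - 1/4 / t, -1 - 1/4 / t^2, 5 * t + 3 + 1/2 / t + 3/8 / t^2;
     6 * t + 13/2 + 17/4 / t + 1 / t^2 + 1/4 / t^3, -6 * t - 5/2 - 5/4 / t - 1/4 / t^2, 1 - 1 / t + 1/4 / t^2 - 1/4 / t^3, 7 * t + 2 + 5/2 / t + 1/8 / t^2 + 3/8 / t^3;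
     2, -2 * t, 2 * t, 0;
     2 * t + 2, -2 * t, 0, 2 * t]

noncomputable def Wex (t : ℝ) : Matrix (Fin 4) (Fin 4) ℝ :=
  !![t - 1/2 - 1/4 / t - 1/8 / t^2, t + 1/2 + 1/4 / t + 1/8 / t^2, -1 - 1/4 / t^2, 5 * t + 3 + 1/2 / t + 3/8 / t^2;
     t - 1/2 - 1/4 / t - 1/8 / t^2 - 1/8 / t^3, t + 1/2 + 1/4 / t + 1/8 / t^2 + 1/8 / t^3, 1 - 1 / t + 1/4 / t^2 - 1/4 / t^3, 7 * t + 2 + 5/2 / t + 1/8 / t^2 + 3/8 / t^3;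
     0, 0, 2 * t, 0;
     0, 0, 0, 2 * t]

lemma hMinv (t : ℝ) : (Mmat t)⁻¹ = Minv t := by
  apply Matrix.inv_eq_right_inv
  ext i j
  fin_cases i <;> fin_cases j <;>
    · simp [Mmat, Minv, Matrix.mul_apply, Fin.sum_univ_succ, Matrix.one_apply, Matrix.vecHead, Matrix.vecTail]
      try ring

lemma hNinv (t : ℝ) (ht : t ≠ 0) : (Nmat t)⁻¹ = Ninv t := by
  apply Matrix.inv_eq_right_inv
  ext i j
  fin_cases i <;> fin_cases j <;>
    · simp [Nmat, Ninv, Matrix.mul_apply, Fin.sum_univ_succ, Matrix.one_apply, Matrix.vecHead, Matrix.vecTail]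
      try field_simp
      try ring

lemma step1 (t : ℝ) (ht : t ≠ 0) : Nmat t * Minv t = P1 t := by
  ext i j
  fin_cases i <;> fin_cases j <;>
    · simp [Nmat, Minv, P1, Matrix.mul_apply, Fin.sum_univ_succ, Matrix.vecHead, Matrix.vecTail]
      try field_simp
      try ring

lemma step2 (t : ℝ) (ht : t ≠ 0) : P1 t * Ninv t = P2 t := by
  ext i j
  fin_cases i <;> fin_cases j <;>
    · simp [P1, Ninv, P2, Matrix.mul_apply, Fin.sum_univ_succ, Matrix.vecHead, Matrix.vecTail]
      try field_simp
      try ring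

lemma step3 (t : ℝ) (ht : t ≠ 0) : P2 t * Mmat t = P3 t := by
  ext i j
  fin_cases i <;> fin_cases j <;>
    · simp [P2, Mmat, P3, Matrix.mul_apply, Fin.sum_univ_succ, Matrix.vecHead, Matrix.vecTail]
      try field_simp
      try ring

lemma step4 (t : ℝ) (ht : t ≠ 0) : P3 t * Mmat t = P4 t := by
  ext i j
  fin_cases i <;> fin_cases j <;>
    · simp [P3, Mmat, P4, Matrix.mul_apply, Fin.sum_univ_succ, Matrix.vecHead, Matrix.vecTail]
      try field_simp
      try ring

lemma step5 (t : ℝ) (ht : t ≠ 0) : P4 t * Ninv t = P5 t := by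
  ext i j
  fin_cases i <;> fin_cases j <;>
    · simp [P4, Ninv, P5, Matrix.mul_apply, Fin.sum_univ_succ, Matrix.vecHead, Matrix.vecTail]
      try field_simp
      try ring

lemma step6 (t : ℝ) (ht : t ≠ 0) : P5 t * Minv t = P6 t := by
  ext i j
  fin_cases i <;> fin_cases j <;>
    · simp [P5, Minv, P6, Matrix.mul_apply, Fin.sum_univ_succ, Matrix.vecHead, Matrix.vecTail]
      try field_simp
      try ring

lemma step7 (t : ℝ) (ht : t ≠ 0) : P6 t * Nmat t = Wex t := by
  ext i j
  fin_cases i <;> fin_cases j <;>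
    · simp [P6, Nmat, Wex, Matrix.mul_apply, Fin.sum_univ_succ, Matrix.vecHead, Matrix.vecTail]
      try field_simp
      try ring

lemma hW (t : ℝ) (ht : t ≠ 0) : Wmat t = Wex t := by
  rw [Wmat, hMinv, hNinv t ht, sq, ← mul_assoc, step1 t ht, step2 t ht, step3 t ht,
    step4 t ht, step5 t ht, step6 t ht, step7 t ht]

lemma eval_charpoly' (A : Matrix (Fin 4) (Fin 4) ℝ) (x : ℝ) :
    eval x A.charpoly = Matrix.det (x • (1 : Matrix (Fin 4) (Fin 4) ℝ) - A) := by
  rw [Matrix.charpoly, ← coe_evalRingHom, RingHom.map_det]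
  congr 1
  ext i j
  by_cases h : i = j
  · subst h; simp [Matrix.charmatrix_apply_eq, Matrix.one_apply]
  · simp [Matrix.charmatrix_apply_ne _ _ _ h, Matrix.one_apply_ne h]

lemma charpoly_Wex (t : ℝ) (ht : t ≠ 0) :
    (Wex t).charpoly = (X - C (2 * t)) ^ 3 * (X - C (1 / (8 * t ^ 3))) := by
  apply Polynomial.funext
  intro x
  rw [eval_charpoly']
  have hdet : x • (1 : Matrix (Fin 4) (Fin 4) ℝ) - Wex t =
      !![x - (t - 1/2 - 1/4 / t - 1/8 / t^2), -(t + 1/2 + 1/4 / t + 1/8 / t^2), -(-1 - 1/4 / t^2), -(5 * t + 3 + 1/2 / t + 3/8 / t^2);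
         -(t - 1/2 - 1/4 / t - 1/8 / t^2 - 1/8 / t^3), x - (t + 1/2 + 1/4 / t + 1/8 / t^2 + 1/8 / t^3), -(1 - 1 / t + 1/4 / t^2 - 1/4 / t^3), -(7 * t + 2 + 5/2 / t + 1/8 / t^2 + 3/8 / t^3);
         0, 0, x - 2 * t, 0;
         0, 0, 0, x - 2 * t] := by
    ext i j
    fin_cases i <;> fin_cases j <;>
      · simp [Wex, Matrix.one_apply, Matrix.vecHead, Matrix.vecTail]
        try ring
  rw [hdet]
  have hrhs : eval x ((X - C (2 * t)) ^ 3 * (X - C (1 / (8 * t ^ 3))))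
      = (x - 2 * t) ^ 3 * (x - 1 / (8 * t ^ 3)) := by simp
  rw [hrhs]
  simp [Matrix.det_succ_row_zero, Fin.sum_univ_succ, Matrix.submatrix_apply,
    Fin.succAbove, Matrix.vecHead, Matrix.vecTail]
  field_simp
  ring

/-- For `t ≠ 0` the longitude matrix `W_t` has characteristic polynomial
`(X − 2t)³(X − 1/(8t³))`; in particular, for `t > 0`, `W_t` is unipotent iff `t = 1/2`. -/
theorem stmt_17 :
    (∀ t : ℝ, t ≠ 0 →
      (Wmat t).charpoly = (X - C (2 * t)) ^ 3 * (X - C (1 / (8 * t ^ 3)))) ∧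
    (∀ t : ℝ, 0 < t → (IsNilpotent (Wmat t - 1) ↔ t = 1 / 2)) := by
  have key : ∀ t : ℝ, t ≠ 0 →
      (Wmat t).charpoly = (X - C (2 * t)) ^ 3 * (X - C (1 / (8 * t ^ 3))) := by
    intro t ht
    rw [hW t ht, charpoly_Wex t ht]
  refine ⟨key, fun t ht => ?_⟩
  have ht0 : t ≠ 0 := ne_of_gt ht
  constructor
  · intro hnil
    have hnil' : IsNilpotent ((1 : Matrix (Fin 4) (Fin 4) ℝ) - Wmat t) := by
      have := hnil.neg
      simpa [neg_sub] using this
    obtain ⟨k, hk⟩ := hnil'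
    have hdet0 : Matrix.det ((1 : Matrix (Fin 4) (Fin 4) ℝ) - Wmat t) = 0 := by
      rcases k with _ | k
      · have h0 := congrArg Matrix.det hk
        simp at h0
      · have h0 := congrArg Matrix.det hk
        rw [Matrix.det_pow, Matrix.det_zero] at h0
        exact pow_eq_zero_iff (Nat.succ_ne_zero k) |>.mp h0
    have heval : eval 1 (Wmat t).charpoly
        = Matrix.det ((1 : Matrix (Fin 4) (Fin 4) ℝ) - Wmat t) := by
      rw [eval_charpoly', one_smul]
    have hz : (1 - 2 * t) ^ 3 * (1 - 1 / (8 * t ^ 3)) = 0 := by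
      rw [key t ht0] at heval
      simp only [eval_mul, eval_pow, eval_sub, eval_X, eval_C, eval_one] at heval
      rw [heval]; exact hdet0
    rcases mul_eq_zero.mp hz with h | h
    · have h1 : 1 - 2 * t = 0 := pow_eq_zero_iff (by norm_num) |>.mp h
      linarith
    · have h3 : 8 * t ^ 3 = 1 := by
        have h8 : (8 : ℝ) * t ^ 3 ≠ 0 := by positivity
        field_simp at h
        linarith
      have h4 : (2 * t - 1) * (4 * t ^ 2 + 2 * t + 1) = 0 := by linear_combination h3
      rcases mul_eq_zero.mp h4 with h5 | h5
      · linarith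
      · nlinarith
  · rintro rfl
    have hcp : (Wmat (1/2 : ℝ)).charpoly = (X - C 1) ^ 4 := by
      rw [key (1/2 : ℝ) (by norm_num)]
      norm_num
      ring
    have hch := Matrix.aeval_self_charpoly (Wmat (1/2 : ℝ))
    rw [hcp] at hch
    refine ⟨4, ?_⟩
    have h4 : aeval (Wmat (1/2 : ℝ)) ((X - C (1 : ℝ)) ^ 4) = (Wmat (1/2 : ℝ) - 1) ^ 4 := by
      simp [map_pow, map_sub, aeval_X, aeval_C]
    rw [← h4, hch]
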